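/- For each n ≥ 0, the Tricomi polynomial t_n^{(α)}(x) = ∑_{k=0}^{n} (-1)^k C(x-α, k) x^{n-k}/(n-k)!, viewed as a polynomial in x, has degree ⌊n/2⌋. -/

import Mathlib

open Polynomial Finset

noncomputable def Ttri (α : ℝ) (n : ℕ) : ℝ[X] :=
  ∑ k ∈ Finset.range (n + 1),
      Polynomial.C ((-1 : ℝ) ^ k / ((k.factorial : ℝ) * ((n - k).factorial : ℝ)))
        * (∏ j ∈ Finset.range k, (Polynomial.X - Polynomial.C (α + (j : ℝ))))
        * Polynomial.X ^ (n - k)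

noncomputable def Gtri (α : ℝ) (n : ℕ) (k : ℕ) : ℝ[X] :=
  Polynomial.C ((-1 : ℝ) ^ k * k / ((k.factorial : ℝ) * ((n + 2 - k).factorial : ℝ)))
    * (∏ j ∈ Finset.range k, (Polynomial.X - Polynomial.C (α + (j : ℝ))))
    * Polynomial.X ^ (n + 2 - k)

lemma Gtri_zero (α : ℝ) (n : ℕ) : Gtri α n 0 = 0 := by
  simp [Gtri]

lemma key_lin (Q : ℝ[X]) (j : ℕ) (u a2 v a1 a0 e2 f β : ℝ)
    (h2 : u * a2 = e2 - f)
    (h1 : -(v * a1) + a0 = f * β) :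
    C u * (C a2 * Q * X ^ (j+2)) - C v * (C a1 * Q * X ^ (j+1)) + X * (C a0 * Q * X ^ j)
      = C e2 * Q * X ^ (j+2) - C f * (Q * (X - C β)) * X ^ (j+1) := by
  have hC2 : C u * C a2 = C e2 - C f := by
    rw [← C_mul, ← C_sub]; exact congrArg C h2
  have hC1 : -(C v * C a1) + C a0 = C f * C β := by
    rw [← C_mul, ← C_mul, ← C_neg, ← C_add]; exact congrArg C h1
  linear_combination (Q * X ^ (j+2)) * hC2 + (Q * X ^ (j+1)) * hC1

lemma key_lin2 (Q : ℝ[X]) (u a v b e f β : ℝ)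
    (h2 : u * a = e - f) (h1 : -(v * b) = f * β) :
    C u * (C a * Q * X ^ 1) - C v * (C b * Q * X ^ 0)
      = C e * Q * X ^ 1 - C f * (Q * (X - C β)) * X ^ 0 := by
  have hC2 : C u * C a = C e - C f := by
    rw [← C_mul, ← C_sub]; exact congrArg C h2
  have hC1 : -(C v * C b) = C f * C β := by
    rw [← C_mul, ← C_mul, ← C_neg]; exact congrArg C h1
  linear_combination (Q * X ^ 1) * hC2 + Q * hC1

lemma Ttri_rec (α : ℝ) (n : ℕ) :
    C ((n:ℝ)+2) * Ttri α (n+2) = C ((n:ℝ)+1+α) * Ttri α (n+1) - X * Ttri α n := by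
  unfold Ttri
  rw [Finset.mul_sum, Finset.mul_sum, Finset.mul_sum]
  conv_lhs => rw [Finset.sum_range_succ, Finset.sum_range_succ]
  conv_rhs => rw [Finset.sum_range_succ]
  have hmain : ∀ k ∈ Finset.range (n+1),
      (C ((n:ℝ)+2) * (Polynomial.C ((-1 : ℝ) ^ k / ((k.factorial : ℝ) * ((n + 2 - k).factorial : ℝ)))
          * (∏ j ∈ Finset.range k, (Polynomial.X - Polynomial.C (α + (j : ℝ))))
          * Polynomial.X ^ (n + 2 - k)))
      - (C ((n:ℝ)+1+α) * (Polynomial.C ((-1 : ℝ) ^ k / ((k.factorial : ℝ) * ((n + 1 - k).factorial : ℝ)))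
          * (∏ j ∈ Finset.range k, (Polynomial.X - Polynomial.C (α + (j : ℝ))))
          * Polynomial.X ^ (n + 1 - k)))
      + (X * (Polynomial.C ((-1 : ℝ) ^ k / ((k.factorial : ℝ) * ((n - k).factorial : ℝ)))
          * (∏ j ∈ Finset.range k, (Polynomial.X - Polynomial.C (α + (j : ℝ))))
          * Polynomial.X ^ (n - k)))
      = Gtri α n k - Gtri α n (k+1) := by
    intro k hk
    simp only [Finset.mem_range] at hk
    obtain ⟨j, rfl⟩ : ∃ j, n = k + j := ⟨n - k, by omega⟩
    unfold Gtri
    rw [show k + j + 2 - k = j + 2 from by omega, show k + j + 1 - k = j + 1 from by omega,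
        show k + j - k = j from by omega, show k + j + 2 - (k+1) = j + 1 from by omega,
        Finset.prod_range_succ]
    have hkf : ((k.factorial : ℝ)) ≠ 0 := by exact_mod_cast k.factorial_ne_zero
    have hjf : ((j.factorial : ℝ)) ≠ 0 := by exact_mod_cast j.factorial_ne_zero
    refine key_lin _ j _ _ _ _ _ _ _ _ ?_ ?_
    · push_cast [Nat.factorial_succ]
      field_simp
      ring
    · push_cast [Nat.factorial_succ]
      field_simp
      ring
  have hs : (∑ k ∈ Finset.range (n+1),
        C ((n:ℝ)+2) * (Polynomial.C ((-1 : ℝ) ^ k / ((k.factorial : ℝ) * ((n + 2 - k).factorial : ℝ)))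
          * (∏ j ∈ Finset.range k, (Polynomial.X - Polynomial.C (α + (j : ℝ))))
          * Polynomial.X ^ (n + 2 - k)))
      - (∑ k ∈ Finset.range (n+1),
        C ((n:ℝ)+1+α) * (Polynomial.C ((-1 : ℝ) ^ k / ((k.factorial : ℝ) * ((n + 1 - k).factorial : ℝ)))
          * (∏ j ∈ Finset.range k, (Polynomial.X - Polynomial.C (α + (j : ℝ))))
          * Polynomial.X ^ (n + 1 - k)))
      + (∑ k ∈ Finset.range (n+1),
        X * (Polynomial.C ((-1 : ℝ) ^ k / ((k.factorial : ℝ) * ((n - k).factorial : ℝ)))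
          * (∏ j ∈ Finset.range k, (Polynomial.X - Polynomial.C (α + (j : ℝ))))
          * Polynomial.X ^ (n - k)))
      = Gtri α n 0 - Gtri α n (n+1) := by
    rw [← Finset.sum_sub_distrib, ← Finset.sum_add_distrib]
    rw [Finset.sum_congr rfl hmain]
    exact Finset.sum_range_sub' (Gtri α n) (n+1)
  have hpt2 :
      (C ((n:ℝ)+2) * (Polynomial.C ((-1 : ℝ) ^ (n+1) / (((n+1).factorial : ℝ) * ((n + 2 - (n+1)).factorial : ℝ)))
          * (∏ j ∈ Finset.range (n+1), (Polynomial.X - Polynomial.C (α + (j : ℝ))))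
          * Polynomial.X ^ (n + 2 - (n+1))))
      - (C ((n:ℝ)+1+α) * (Polynomial.C ((-1 : ℝ) ^ (n+1) / (((n+1).factorial : ℝ) * ((n + 1 - (n+1)).factorial : ℝ)))
          * (∏ j ∈ Finset.range (n+1), (Polynomial.X - Polynomial.C (α + (j : ℝ))))
          * Polynomial.X ^ (n + 1 - (n+1))))
      = Gtri α n (n+1) - Gtri α n (n+2) := by
    unfold Gtri
    rw [show n + 2 - (n+1) = 1 from by omega, show n + 1 - (n+1) = 0 from by omega,
        show n + 2 - (n+2) = 0 from by omega,
        show (∏ j ∈ Finset.range (n+2), (Polynomial.X - Polynomial.C (α + (j : ℝ))))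
          = (∏ j ∈ Finset.range (n+1), (Polynomial.X - Polynomial.C (α + (j : ℝ))))
            * (Polynomial.X - Polynomial.C (α + ((n+1 : ℕ) : ℝ))) from Finset.prod_range_succ _ _]
    have hnf : (((n+1).factorial : ℝ)) ≠ 0 := by exact_mod_cast (n+1).factorial_ne_zero
    refine key_lin2 _ _ _ _ _ _ _ _ ?_ ?_
    · push_cast [Nat.factorial_succ]
      field_simp
      ring
    · push_cast [Nat.factorial_succ]
      field_simp
      ring
  have hpt3 :
      (C ((n:ℝ)+2) * (Polynomial.C ((-1 : ℝ) ^ (n+2) / (((n+2).factorial : ℝ) * ((n + 2 - (n+2)).factorial : ℝ)))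
          * (∏ j ∈ Finset.range (n+2), (Polynomial.X - Polynomial.C (α + (j : ℝ))))
          * Polynomial.X ^ (n + 2 - (n+2))))
      = Gtri α n (n+2) := by
    unfold Gtri
    have hC : C ((n:ℝ)+2) * C ((-1 : ℝ) ^ (n+2) / (((n+2).factorial : ℝ) * ((n + 2 - (n+2)).factorial : ℝ)))
        = C ((-1 : ℝ) ^ (n+2) * ((n+2:ℕ):ℝ) / (((n+2).factorial : ℝ) * ((n + 2 - (n+2)).factorial : ℝ))) := by
      rw [← C_mul]
      congr 1
      push_cast
      ring
    linear_combination ((∏ j ∈ Finset.range (n+2), (Polynomial.X - Polynomial.C (α + (j : ℝ))))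
        * Polynomial.X ^ (n + 2 - (n+2))) * hC
  have hG0 := Gtri_zero α n
  linear_combination hs + hpt2 + hpt3 + hG0

noncomputable def Lc (α : ℝ) (n : ℕ) : ℝ :=
  (-(2:ℝ)⁻¹) ^ (n / 2) / ((n / 2).factorial : ℝ) *
    (if n % 2 = 0 then 1 else α + 2 * ((n / 2 : ℕ) : ℝ) / 3)

lemma Lc_ne_zero (α : ℝ) (hα : 0 < α) (n : ℕ) : Lc α n ≠ 0 := by
  unfold Lc
  have h1 : (-(2:ℝ)⁻¹) ^ (n / 2) ≠ 0 := by
    apply pow_ne_zero; norm_num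
  have h2 : (((n / 2).factorial : ℝ)) ≠ 0 := by exact_mod_cast (n / 2).factorial_ne_zero
  rcases Nat.eq_zero_or_pos (n % 2) with h | h
  · rw [if_pos h]
    simp [h1, h2]
  · rw [if_neg (by omega)]
    have : (0:ℝ) < α + 2 * ((n / 2 : ℕ) : ℝ) / 3 := by positivity
    intro hc
    rcases mul_eq_zero.mp hc with hc | hc
    · exact (div_ne_zero h1 h2) hc
    · exact this.ne' hc

lemma Ttri_zero (α : ℝ) : Ttri α 0 = 1 := by
  simp [Ttri]

lemma Ttri_one (α : ℝ) : Ttri α 1 = C α := by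
  simp [Ttri, Finset.sum_range_succ, Finset.prod_range_one, Nat.factorial]
  try ring

lemma Ttri_step (α : ℝ) (n : ℕ) :
    Ttri α (n+2) = C (((n:ℝ)+2)⁻¹) * (C ((n:ℝ)+1+α) * Ttri α (n+1) - X * Ttri α n) := by
  have hne : ((n:ℝ)+2) ≠ 0 := by positivity
  rw [← Ttri_rec α n, ← mul_assoc, ← C_mul, inv_mul_cancel₀ hne, C_1, one_mul]

lemma Ttri_main (α : ℝ) (hα : 0 < α) :
    ∀ n : ℕ, (Ttri α n).natDegree ≤ n / 2 ∧ (Ttri α n).coeff (n / 2) = Lc α n := by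
  have key : ∀ n : ℕ,
      ((Ttri α n).natDegree ≤ n / 2 ∧ (Ttri α n).coeff (n / 2) = Lc α n) ∧
      ((Ttri α (n+1)).natDegree ≤ (n+1) / 2 ∧ (Ttri α (n+1)).coeff ((n+1) / 2) = Lc α (n+1)) := by
    intro n
    induction n with
    | zero =>
      constructor
      · rw [Ttri_zero]
        constructor
        · simp
        · simp [Lc]
      · rw [Ttri_one]
        constructor
        · simp
        · simp [Lc]
    | succ n ih =>
      refine ⟨ih.2, ?_, ?_⟩
      · -- degree bound for n+2
        rw [Ttri_step]
        calc (C (((n:ℝ)+2)⁻¹) * (C ((n:ℝ)+1+α) * Ttri α (n+1) - X * Ttri α n)).natDegree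
            ≤ (C ((n:ℝ)+1+α) * Ttri α (n+1) - X * Ttri α n).natDegree := natDegree_C_mul_le _ _
          _ ≤ max (C ((n:ℝ)+1+α) * Ttri α (n+1)).natDegree (X * Ttri α n).natDegree :=
              natDegree_sub_le _ _
          _ ≤ (n+2)/2 := by
              apply max_le
              · exact le_trans (natDegree_C_mul_le _ _) (le_trans ih.2.1 (by omega))
              · exact le_trans (natDegree_mul_le)
                  (by
                    have := ih.1.1
                    have hx : (X : ℝ[X]).natDegree ≤ 1 := natDegree_X_le
                    omega)
      · -- coefficient
        rw [Ttri_step, coeff_C_mul, coeff_sub, coeff_C_mul,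
            show (n+2)/2 = n/2 + 1 from by omega, coeff_X_mul, ih.1.2]
        rcases Nat.even_or_odd n with ⟨m, hm⟩ | ⟨m, hm⟩
        · -- n even: coeff of T(n+1) at n/2+1 vanishes
          have hz : (Ttri α (n+1)).coeff (n/2 + 1) = 0 := by
            apply coeff_eq_zero_of_natDegree_lt
            exact lt_of_le_of_lt ih.2.1 (by omega)
          rw [hz]
          subst hm
          have h2 : (m + m) / 2 = m := by omega
          have h3 : (m + m + 2) / 2 = m + 1 := by omega
          have hfm : ((m.factorial : ℝ)) ≠ 0 := by exact_mod_cast m.factorial_ne_zero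
          rw [Lc, Lc, h2, h3, if_pos (by omega), if_pos (by omega)]
          push_cast [Nat.factorial_succ]
          field_simp
          ring
        · -- n odd
          have h1 : n / 2 + 1 = (n+1)/2 := by omega
          rw [h1, ih.2.2]
          subst hm
          have h2 : (2*m+1) / 2 = m := by omega
          have h3 : (2*m+1+1) / 2 = m + 1 := by omega
          have h4 : (2*m+1+2) / 2 = m + 1 := by omega
          have hfm : ((m.factorial : ℝ)) ≠ 0 := by exact_mod_cast m.factorial_ne_zero
          rw [Lc, Lc, Lc, h2, h3, h4, if_pos (by omega), if_neg (by omega), if_neg (by omega)]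
          push_cast [Nat.factorial_succ]
          field_simp
          ring
  exact fun n => (key n).1

theorem tricomi_polynomial_degree (α : ℝ) (hα : 0 < α) (n : ℕ) :
    (∑ k ∈ Finset.range (n + 1),
        Polynomial.C ((-1 : ℝ) ^ k / ((k.factorial : ℝ) * ((n - k).factorial : ℝ)))
          * (∏ j ∈ Finset.range k, (Polynomial.X - Polynomial.C (α + (j : ℝ))))
          * Polynomial.X ^ (n - k)).natDegree = n / 2 := by
  show (Ttri α n).natDegree = n / 2
  have h := Ttri_main α hα n
  refine le_antisymm h.1 (le_natDegree_of_ne_zero ?_)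
  rw [h.2]
  exact Lc_ne_zero α hα n
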